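/- For every positive integer n, letting u_n(132) = |U_n(132)| be the number of 132-avoiding permutations of length n with a unique longest increasing subsequence, one has 2·u_n(132) ≥ C_n, where C_n = binomial(2n, n)/(n+1) is the n-th Catalan number; equivalently u_n(132)/C_n ≥ 1/2. -/

import Mathlib

/-- `s` is (the position set of) an increasing subsequence of the permutation `p`. -/
def IncSubseq {n : ℕ} (p : Equiv.Perm (Fin n)) (s : Finset (Fin n)) : Prop :=
  ∀ a ∈ s, ∀ b ∈ s, a < b → p a < p b

/-- `p` avoids the pattern 132. -/
def Avoids132 {n : ℕ} (p : Equiv.Perm (Fin n)) : Prop :=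
  ¬ ∃ i j k : Fin n, i < j ∧ j < k ∧ p i < p k ∧ p k < p j

/-- The subsequence with position set `s` begins at position `i`. -/
def BeginsAt {n : ℕ} (s : Finset (Fin n)) (i : Fin n) : Prop :=
  i ∈ s ∧ ∀ a ∈ s, i ≤ a

/-- The rank of the entry at position `i`: the maximal length of an increasing
subsequence of `p` beginning at position `i`. -/
noncomputable def rank {n : ℕ} (p : Equiv.Perm (Fin n)) (i : Fin n) : ℕ :=
  sSup {k : ℕ | ∃ s : Finset (Fin n), IncSubseq p s ∧ BeginsAt s i ∧ s.card = k}

/-- Membership in `S n`: positive entries, consecutive decreases by at most 1,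
and the last entry equals 1. -/
def InSn (n : ℕ) (t : Fin n → ℕ) : Prop :=
  (∀ i, 1 ≤ t i) ∧
  (∀ i : ℕ, (h : i + 1 < n) → t ⟨i, Nat.lt_of_succ_lt h⟩ ≤ t ⟨i + 1, h⟩ + 1) ∧
  (∀ h : 0 < n, t ⟨n - 1, Nat.sub_lt h Nat.one_pos⟩ = 1)

/-- `p` has a unique longest increasing subsequence. -/
def HasULIS {n : ℕ} (p : Equiv.Perm (Fin n)) : Prop :=
  ∃! s : Finset (Fin n), IncSubseq p s ∧
    ∀ t : Finset (Fin n), IncSubseq p t → t.card ≤ s.card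


namespace ULIS132

/-- maximum of a list of naturals -/
def maxL (L : List ℕ) : ℕ := L.foldr max 0

lemma le_maxL {L : List ℕ} {x : ℕ} (hx : x ∈ L) : x ≤ maxL L := by
  induction L with
  | nil => simp at hx
  | cons a t ih =>
    rcases List.mem_cons.1 hx with h | h
    · subst h; exact le_max_left _ _
    · exact le_trans (ih h) (le_max_right _ _)

lemma maxL_mem {L : List ℕ} (h : L ≠ []) (hpos : ∀ x ∈ L, 1 ≤ x) : maxL L ∈ L := by
  induction L with
  | nil => simp at h
  | cons a t ih =>
    by_cases ht : t = []
    · subst ht; simp [maxL]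
    · have h1 : maxL t ∈ t := ih ht (fun x hx => hpos x (List.mem_cons_of_mem _ hx))
      rcases le_total a (maxL t) with hle | hle
      · have : maxL (a :: t) = maxL t := max_eq_right hle
        rw [this]; exact List.mem_cons_of_mem _ h1
      · have : maxL (a :: t) = a := max_eq_left hle
        rw [this]; exact List.mem_cons_self

/-- validity of sequences, list form -/
structure ValidL (L : List ℕ) : Prop where
  ne : L ≠ []
  pos : ∀ x ∈ L, 1 ≤ x
  chain : List.Chain' (fun a b => a ≤ b + 1) L
  last : L.getLast? = some 1

/-- unique maximum value `M` with split witness -/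
def UMax (L : List ℕ) (M : ℕ) : Prop :=
  ∃ a b : List ℕ, L = a ++ M :: b ∧ (∀ x ∈ a, x < M) ∧ (∀ x ∈ b, x < M)

lemma umax_of_count {L : List ℕ} {M : ℕ} (hle : ∀ x ∈ L, x ≤ M)
    (hc : L.count M = 1) : UMax L M := by
  induction L with
  | nil => simp at hc
  | cons a t ih =>
    by_cases ha : a = M
    · subst ha
      have hc0 : t.count a = 0 := by
        have h2 := List.count_cons_self (a := a) (l := t)
        omega
      refine ⟨[], t, by simp, by simp, ?_⟩
      intro x hx
      have hxle := hle x (List.mem_cons_of_mem _ hx)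
      have : x ≠ a := fun h => by
        subst h
        exact absurd (List.count_pos_iff.2 hx) (by omega)
      omega
    · have hc' : t.count M = 1 := by
        rw [List.count_cons] at hc
        simpa [ha] using hc
      obtain ⟨u, v, huv, hu, hv⟩ := ih (fun x hx => hle x (List.mem_cons_of_mem _ hx)) hc'
      have haM : a < M := lt_of_le_of_ne (hle a (List.mem_cons_self)) ha
      exact ⟨a :: u, v, by simp [huv], by
        intro x hx
        rcases List.mem_cons.1 hx with h | h
        · exact h ▸ haM
        · exact hu x h, hv⟩

end ULIS132

namespace ULIS132

/-- sequence associated to a binary tree -/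
def toSeq : Tree Unit → List ℕ
  | BinaryTree.nil => []
  | BinaryTree.node _ l r => (toSeq l).map (· + 1) ++ 1 :: toSeq r

lemma length_toSeq (τ : Tree Unit) : (toSeq τ).length = τ.numNodes := by
  induction τ with
  | nil => rfl
  | node _ l r ihl ihr => simp [toSeq, Tree.numNodes, ihl, ihr]; omega

lemma pos_toSeq (τ : Tree Unit) : ∀ x ∈ toSeq τ, 1 ≤ x := by
  induction τ with
  | nil => simp [toSeq]
  | node _ l r ihl ihr =>
    intro x hx
    simp only [toSeq, List.mem_append, List.mem_cons, List.mem_map] at hx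
    rcases hx with ⟨y, _, rfl⟩ | rfl | h
    · omega
    · exact le_rfl
    · exact ihr x h

lemma toSeq_ne_nil {τ : Tree Unit} (h : τ ≠ Tree.nil) : toSeq τ ≠ [] := by
  cases τ with
  | nil => exact absurd rfl h
  | node _ l r => simp [toSeq]

lemma last_toSeq {τ : Tree Unit} (h : τ ≠ Tree.nil) : (toSeq τ).getLast? = some 1 := by
  induction τ with
  | nil => exact absurd rfl h
  | node _ l r ihl ihr =>
    by_cases hr : r = Tree.nil
    · subst hr
      simp [toSeq]
    · simp only [toSeq]
      rw [List.getLast?_append_cons]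
      have : toSeq r = (toSeq r).head (toSeq_ne_nil hr) :: (toSeq r).tail :=
        (List.cons_head_tail _).symm
      rw [this] at ihr ⊢
      rw [List.getLast?_cons_cons]
      exact ihr hr

lemma chain_toSeq (τ : Tree Unit) : List.Chain' (fun a b => a ≤ b + 1) (toSeq τ) := by
  induction τ with
  | nil => simp [toSeq, List.Chain']
  | node _ l r ihl ihr =>
    simp only [toSeq]
    rw [List.Chain', List.isChain_append]
    refine ⟨?_, ?_, ?_⟩
    · rw [List.isChain_map]
      exact List.IsChain.imp (fun a b h => by omega) ihl
    · rw [List.isChain_cons]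
      exact ⟨fun y _ => by omega, ihr⟩
    · intro x hx y hy
      by_cases hl : l = Tree.nil
      · subst hl; simp [toSeq] at hx
      · rw [List.getLast?_map] at hx
        have h1 := last_toSeq hl
        rw [h1] at hx
        simp at hx
        simp at hy
        omega

lemma validL_toSeq {τ : Tree Unit} (h : τ ≠ Tree.nil) : ULIS132.ValidL (toSeq τ) :=
  ⟨toSeq_ne_nil h, pos_toSeq τ, chain_toSeq τ, last_toSeq h⟩

lemma append_eq_append {a : ℕ} : ∀ {xs xs' ys ys' : List ℕ},
    (∀ x ∈ xs, x ≠ a) → (∀ x ∈ xs', x ≠ a) →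
    xs ++ a :: ys = xs' ++ a :: ys' → xs = xs' ∧ ys = ys' := by
  intro xs
  induction xs with
  | nil =>
    intro xs' ys ys' _ h2 heq
    cases xs' with
    | nil => simpa using heq
    | cons b t =>
      simp only [List.nil_append, List.cons_append, List.cons.injEq] at heq
      exact absurd heq.1.symm (h2 b (List.mem_cons_self))
  | cons b t ih =>
    intro xs' ys ys' h1 h2 heq
    cases xs' with
    | nil =>
      simp only [List.nil_append, List.cons_append, List.cons.injEq] at heq
      exact absurd heq.1 (h1 b (List.mem_cons_self))
    | cons c t' =>
      simp only [List.cons_append, List.cons.injEq] at heq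
      obtain ⟨rfl, heq⟩ := heq
      obtain ⟨h3, h4⟩ := ih (fun x hx => h1 x (List.mem_cons_of_mem _ hx))
        (fun x hx => h2 x (List.mem_cons_of_mem _ hx)) heq
      exact ⟨by rw [h3], h4⟩

lemma toSeq_injective : Function.Injective toSeq := by
  intro τ₁
  induction τ₁ with
  | nil =>
    intro τ₂ h
    cases τ₂ with
    | nil => rfl
    | node _ l r => simp [toSeq] at h
  | node _ l r ihl ihr =>
    intro τ₂ h
    cases τ₂ with
    | nil => simp [toSeq] at h
    | node u l' r' =>
      simp only [toSeq] at h
      have h1 : ∀ x ∈ (toSeq l).map (· + 1), x ≠ 1 := by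
        intro x hx
        simp only [List.mem_map] at hx
        obtain ⟨y, hy, rfl⟩ := hx
        have := pos_toSeq l y hy
        omega
      have h2 : ∀ x ∈ (toSeq l').map (· + 1), x ≠ 1 := by
        intro x hx
        simp only [List.mem_map] at hx
        obtain ⟨y, hy, rfl⟩ := hx
        have := pos_toSeq l' y hy
        omega
      obtain ⟨ha, hb⟩ := append_eq_append h1 h2 h
      have hmap : toSeq l = toSeq l' :=
        List.map_injective_iff.2 (fun a b => by omega) ha
      cases u
      rw [ihl hmap, ihr hb]

end ULIS132
namespace ULIS132

lemma maxL_le {L : List ℕ} {M : ℕ} (h : ∀ x ∈ L, x ≤ M) : maxL L ≤ M := by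
  induction L with
  | nil => simp [maxL]
  | cons a t ih =>
    have : maxL (a :: t) = max a (maxL t) := rfl
    rw [this]
    exact max_le (h a (List.mem_cons_self))
      (ih fun x hx => h x (List.mem_cons_of_mem _ hx))

lemma umax_mem {L : List ℕ} {M : ℕ} (h : UMax L M) : M ∈ L := by
  obtain ⟨a, b, rfl, _, _⟩ := h
  simp

lemma umax_le {L : List ℕ} {M : ℕ} (h : UMax L M) : ∀ x ∈ L, x ≤ M := by
  obtain ⟨a, b, rfl, ha, hb⟩ := h
  intro x hx
  rcases List.mem_append.1 hx with h1 | h1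
  · exact le_of_lt (ha x h1)
  · rcases List.mem_cons.1 h1 with rfl | h2
    · exact le_rfl
    · exact le_of_lt (hb x h2)

lemma umax_maxL {L : List ℕ} {M : ℕ} (h : UMax L M) : maxL L = M :=
  le_antisymm (maxL_le (umax_le h)) (le_maxL (umax_mem h))


lemma count2_mem {a M : ℕ} {t : List ℕ} (h : 2 ≤ (a :: t).count M) (ha : a = M) :
    M ∈ t := by
  subst ha
  rw [List.count_cons_self] at h
  exact List.count_pos_iff.1 (by omega)

lemma count2_ne {a M : ℕ} {t : List ℕ} (h : 2 ≤ (a :: t).count M) (ha : a ≠ M) :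
    2 ≤ t.count M := by
  rw [List.count_cons] at h
  simpa [ha] using h

/-- insert `M+1` just before the first occurrence of `M`, raising prefix -/
def Hins (M : ℕ) : List ℕ → List ℕ
  | [] => []
  | a :: s => (a + 1) :: (if a = M then a :: s else Hins M s)

/-- delete first occurrence of `M`, apply `Hins` after it -/
def Phi' (M : ℕ) : List ℕ → List ℕ
  | [] => []
  | a :: s => if a = M then Hins M s else a :: Phi' M s

def Hinv (M : ℕ) : List ℕ → List ℕ
  | [] => []
  | a :: s => if a = M + 1 then s else (a - 1) :: Hinv M s

def Psi' (M : ℕ) : List ℕ → List ℕ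
  | [] => []
  | b :: y => if b < M then b :: Psi' M y else M :: Hinv M (b :: y)

def Phi (L : List ℕ) : List ℕ := Phi' (maxL L) L

def Psi (L : List ℕ) : List ℕ := Psi' (maxL L - 1) L

section HinsLemmas

variable {M : ℕ}

lemma Hins_length {s : List ℕ} (h : M ∈ s) : (Hins M s).length = s.length + 1 := by
  induction s with
  | nil => simp at h
  | cons a t ih =>
    by_cases ha : a = M
    · simp [Hins, ha]
    · rcases List.mem_cons.1 h with h1 | h1
      · exact absurd h1.symm ha
      · simp [Hins, ha, ih h1]

lemma Hins_umax {s : List ℕ} (hle : ∀ x ∈ s, x ≤ M) (h : M ∈ s) :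
    UMax (Hins M s) (M + 1) := by
  induction s with
  | nil => simp at h
  | cons a t ih =>
    by_cases ha : a = M
    · subst ha
      refine ⟨[], a :: t, by simp [Hins], by simp, ?_⟩
      intro x hx
      have := hle x hx
      omega
    · rcases List.mem_cons.1 h with h1 | h1
      · exact absurd h1.symm ha
      · obtain ⟨u, v, huv, hu, hv⟩ := ih (fun x hx => hle x (List.mem_cons_of_mem _ hx)) h1
        refine ⟨(a + 1) :: u, v, by simp [Hins, ha, huv], ?_, hv⟩
        intro x hx
        rcases List.mem_cons.1 hx with rfl | h2
        · have := hle a (List.mem_cons_self)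
          have : a < M := lt_of_le_of_ne this ha
          omega
        · exact hu x h2

lemma Hins_pos {s : List ℕ} (hp : ∀ x ∈ s, 1 ≤ x) : ∀ x ∈ Hins M s, 1 ≤ x := by
  induction s with
  | nil => simp [Hins]
  | cons a t ih =>
    intro x hx
    by_cases ha : a = M
    · simp only [Hins, ha, if_pos rfl] at hx
      rcases List.mem_cons.1 hx with rfl | h2
      · omega
      · exact hp x (by rw [ha]; exact h2)
    · simp only [Hins, if_neg ha] at hx
      rcases List.mem_cons.1 hx with rfl | h2
      · omega
      · exact ih (fun y hy => hp y (List.mem_cons_of_mem _ hy)) x h2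

lemma Hins_cons (a : ℕ) (t : List ℕ) :
    ∃ X, Hins M (a :: t) = (a + 1) :: X := ⟨_, rfl⟩

lemma Hins_chain {s : List ℕ} (hc : List.Chain' (fun a b => a ≤ b + 1) s) (h : M ∈ s) :
    List.Chain' (fun a b => a ≤ b + 1) (Hins M s) := by
  induction s with
  | nil => simp [Hins, List.Chain']
  | cons a t ih =>
    by_cases ha : a = M
    · simp only [Hins, if_pos ha]
      exact List.isChain_cons.2 ⟨fun y hy => by
        cases t with
        | nil => simp at hy; omega
        | cons b t' => simp at hy; omega, hc⟩
    · rcases List.mem_cons.1 h with h1 | h1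
      · exact absurd h1.symm ha
      · simp only [Hins, if_neg ha]
        have hct : List.Chain' (fun a b => a ≤ b + 1) t := hc.tail
        refine List.isChain_cons.2 ⟨?_, ih hct h1⟩
        intro y hy
        cases t with
        | nil => simp at h1
        | cons b t' =>
          obtain ⟨X, hX⟩ := Hins_cons (M := M) b t'
          rw [hX] at hy
          simp at hy
          have hab : a ≤ b + 1 := (List.isChain_cons_cons.1 hc).1
          omega

lemma Hins_last {s : List ℕ} (h : M ∈ s) : (Hins M s).getLast? = s.getLast? := by
  induction s with
  | nil => simp at h
  | cons a t ih =>
    by_cases ha : a = M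
    · simp only [Hins, if_pos ha]
      rw [List.getLast?_cons_cons]
    · rcases List.mem_cons.1 h with h1 | h1
      · exact absurd h1.symm ha
      · simp only [Hins, if_neg ha]
        cases t with
        | nil => simp at h1
        | cons b t' =>
          obtain ⟨X, hX⟩ := Hins_cons (M := M) b t'
          rw [hX, List.getLast?_cons_cons, ← hX, ih h1, List.getLast?_cons_cons]

lemma Hinv_Hins {s : List ℕ} (hle : ∀ x ∈ s, x ≤ M) : Hinv M (Hins M s) = s := by
  induction s with
  | nil => simp [Hins, Hinv]
  | cons a t ih =>
    by_cases ha : a = M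
    · subst ha
      simp [Hins, Hinv]
    · have haM : a + 1 ≠ M + 1 := by
        intro h; exact ha (by omega)
      simp only [Hins, if_neg ha, Hinv, if_neg haM]
      rw [ih (fun x hx => hle x (List.mem_cons_of_mem _ hx))]
      simp

end HinsLemmas

section PhiLemmas

variable {M : ℕ}

lemma Phi'_length {L : List ℕ} (h : 2 ≤ L.count M) : (Phi' M L).length = L.length := by
  induction L with
  | nil => simp at h
  | cons a t ih =>
    by_cases ha : a = M
    · have hm : M ∈ t := count2_mem h ha
      simp [Phi', ha, Hins_length hm]
    · have h' : 2 ≤ t.count M := count2_ne h ha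
      simp [Phi', ha, ih h']

lemma Phi'_umax {L : List ℕ} (hle : ∀ x ∈ L, x ≤ M) (h : 2 ≤ L.count M) :
    UMax (Phi' M L) (M + 1) := by
  induction L with
  | nil => simp at h
  | cons a t ih =>
    by_cases ha : a = M
    · have hm : M ∈ t := count2_mem h ha
      simp only [Phi', if_pos ha]
      exact Hins_umax (fun x hx => hle x (List.mem_cons_of_mem _ hx)) hm
    · have h' : 2 ≤ t.count M := count2_ne h ha
      obtain ⟨u, v, huv, hu, hv⟩ := ih (fun x hx => hle x (List.mem_cons_of_mem _ hx)) h'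
      refine ⟨a :: u, v, by simp [Phi', ha, huv], ?_, hv⟩
      intro x hx
      rcases List.mem_cons.1 hx with h2 | h2
      · have h3 : a ≤ M := hle a (List.mem_cons_self)
        have h4 : a ≠ M := ha
        omega
      · exact hu x h2

lemma Phi'_pos {L : List ℕ} (hp : ∀ x ∈ L, 1 ≤ x) : ∀ x ∈ Phi' M L, 1 ≤ x := by
  induction L with
  | nil => simp [Phi']
  | cons a t ih =>
    intro x hx
    by_cases ha : a = M
    · simp only [Phi', if_pos ha] at hx
      exact Hins_pos (fun y hy => hp y (List.mem_cons_of_mem _ hy)) x hx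
    · simp only [Phi', if_neg ha] at hx
      rcases List.mem_cons.1 hx with rfl | h2
      · exact hp x (List.mem_cons_self)
      · exact ih (fun y hy => hp y (List.mem_cons_of_mem _ hy)) x h2

lemma Phi'_head {L : List ℕ} (h : 2 ≤ L.count M)
    (hc : List.Chain' (fun a b => a ≤ b + 1) L) :
    ∃ b c rest rest', L = b :: rest' ∧ Phi' M L = c :: rest ∧ b ≤ c := by
  cases L with
  | nil => simp at h
  | cons a t =>
    by_cases ha : a = M
    · have hm : M ∈ t := count2_mem h ha
      cases t with
      | nil => simp at hm
      | cons b t' =>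
        obtain ⟨X, hX⟩ := Hins_cons (M := M) b t'
        have hab : a ≤ b + 1 := (List.isChain_cons_cons.1 hc).1
        exact ⟨a, b + 1, X, b :: t', rfl, by simp [Phi', ha, hX], by omega⟩
    · exact ⟨a, a, Phi' M t, t, rfl, by simp [Phi', ha], le_rfl⟩

lemma Phi'_chain {L : List ℕ} (h : 2 ≤ L.count M)
    (hc : List.Chain' (fun a b => a ≤ b + 1) L) :
    List.Chain' (fun a b => a ≤ b + 1) (Phi' M L) := by
  induction L with
  | nil => simp [Phi', List.Chain']
  | cons a t ih =>
    by_cases ha : a = M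
    · have hm : M ∈ t := count2_mem h ha
      simp only [Phi', if_pos ha]
      exact Hins_chain hc.tail hm
    · have h' : 2 ≤ t.count M := count2_ne h ha
      simp only [Phi', if_neg ha]
      obtain ⟨b, c, rest, rest', hL, hPhi, hbc⟩ := Phi'_head h' hc.tail
      refine List.isChain_cons.2 ⟨?_, ih h' hc.tail⟩
      intro y hy
      rw [hPhi] at hy
      simp at hy
      subst hy
      have hab : a ≤ b + 1 := by
        rw [hL] at hc
        exact (List.isChain_cons_cons.1 hc).1
      omega

lemma getLast?_cons_of_ne {a : ℕ} {l : List ℕ} (h : l ≠ []) :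
    (a :: l).getLast? = l.getLast? := by
  cases l with
  | nil => exact absurd rfl h
  | cons b t => rw [List.getLast?_cons_cons]

lemma Phi'_ne_nil {L : List ℕ} (h : 2 ≤ L.count M) : Phi' M L ≠ [] := by
  have h1 := Phi'_length h
  intro h2
  rw [h2] at h1
  have : L ≠ [] := by rintro rfl; simp at h
  cases L with
  | nil => simp at h
  | cons a t => simp at h1

lemma Phi'_last {L : List ℕ} (h : 2 ≤ L.count M) :
    (Phi' M L).getLast? = L.getLast? := by
  induction L with
  | nil => simp at h
  | cons a t ih =>
    by_cases ha : a = M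
    · have hm : M ∈ t := count2_mem h ha
      have hne : t ≠ [] := by rintro rfl; simp at hm
      simp only [Phi', if_pos ha]
      rw [Hins_last hm]
      exact (getLast?_cons_of_ne hne).symm
    · have h' : 2 ≤ t.count M := count2_ne h ha
      have hne : t ≠ [] := by rintro rfl; simp at h'
      simp only [Phi', if_neg ha]
      rw [getLast?_cons_of_ne (Phi'_ne_nil h'), ih h']
      exact (getLast?_cons_of_ne hne).symm

lemma Psi'_Phi' {L : List ℕ} (h : 2 ≤ L.count M) (hle : ∀ x ∈ L, x ≤ M)
    (hc : List.Chain' (fun a b => a ≤ b + 1) L) :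
    Psi' M (Phi' M L) = L := by
  induction L with
  | nil => simp at h
  | cons a t ih =>
    by_cases ha : a = M
    · have hm : M ∈ t := count2_mem h ha
      simp only [Phi', if_pos ha]
      cases t with
      | nil => simp at hm
      | cons b t' =>
        obtain ⟨X, hX⟩ := Hins_cons (M := M) b t'
        have hab : a ≤ b + 1 := (List.isChain_cons_cons.1 hc).1
        have hbM : ¬ (b + 1 < M) := by omega
        rw [hX]
        simp only [Psi', if_neg hbM]
        rw [← hX, Hinv_Hins (fun x hx => hle x (List.mem_cons_of_mem _ hx)), ha]
    · have h' : 2 ≤ t.count M := count2_ne h ha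
      have haM : a < M := lt_of_le_of_ne (hle a (List.mem_cons_self)) ha
      simp only [Phi', if_neg ha]
      obtain ⟨b, c, rest, rest', hL, hPhi, hbc⟩ := Phi'_head h' hc.tail
      simp only [Psi', if_pos haM]
      rw [ih h' (fun x hx => hle x (List.mem_cons_of_mem _ hx)) hc.tail]

end PhiLemmas

end ULIS132
namespace ULIS132

/-- `Abar f i j`: every entry in positions `[i, j)` is greater than `f j` -/
def Abar (f : ℕ → ℕ) (i j : ℕ) : Prop := ∀ k < j, i ≤ k → f j < f k

instance (f : ℕ → ℕ) (i j : ℕ) : Decidable (Abar f i j) := by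
  unfold Abar; infer_instance

/-- value-comparison of positions for the permutation associated to `f` -/
def ltp {n : ℕ} (f : ℕ → ℕ) (a b : Fin n) : Prop :=
  if (a : ℕ) < (b : ℕ) then Abar f a b else ((b : ℕ) < (a : ℕ) ∧ ¬ Abar f b a)

instance {n : ℕ} (f : ℕ → ℕ) (a b : Fin n) : Decidable (ltp f a b) := by
  unfold ltp; infer_instance

section ltp

variable {n : ℕ} {f : ℕ → ℕ}

lemma ltp_irrefl (a : Fin n) : ¬ ltp f a a := by
  simp [ltp]

lemma ltp_of_lt {a b : Fin n} (h : (a : ℕ) < b) : ltp f a b ↔ Abar f a b := by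
  simp [ltp, h]

lemma ltp_of_gt {a b : Fin n} (h : (b : ℕ) < a) : ltp f a b ↔ ¬ Abar f b a := by
  have : ¬ ((a : ℕ) < b) := by omega
  simp [ltp, this, h]

lemma ltp_total (a b : Fin n) (hne : a ≠ b) : ltp f a b ∨ ltp f b a := by
  have hv : (a : ℕ) ≠ (b : ℕ) := fun h => hne (Fin.ext h)
  rcases lt_or_gt_of_ne hv with h | h
  · by_cases hA : Abar f a b
    · exact Or.inl ((ltp_of_lt h).2 hA)
    · exact Or.inr ((ltp_of_gt h).2 hA)
  · by_cases hA : Abar f b a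
    · exact Or.inr ((ltp_of_lt h).2 hA)
    · exact Or.inl ((ltp_of_gt h).2 hA)

lemma ltp_asymm {a b : Fin n} (h : ltp f a b) : ¬ ltp f b a := by
  intro h'
  rcases lt_trichotomy (a : ℕ) (b : ℕ) with hv | hv | hv
  · exact ((ltp_of_gt hv).1 h') ((ltp_of_lt hv).1 h)
  · exact ltp_irrefl a (by rwa [show a = b from Fin.ext hv] at h ⊢ )
  · exact ((ltp_of_gt hv).1 h) ((ltp_of_lt hv).1 h')

lemma ltp_trans {a b c : Fin n} (h1 : ltp f a b) (h2 : ltp f b c) : ltp f a c := by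
  have hab : a ≠ b := by rintro rfl; exact ltp_irrefl a h1
  have hbc : b ≠ c := by rintro rfl; exact ltp_irrefl b h2
  have hac : a ≠ c := by
    rintro rfl
    exact ltp_asymm h1 h2
  have hab' : (a : ℕ) ≠ b := fun h => hab (Fin.ext h)
  have hbc' : (b : ℕ) ≠ c := fun h => hbc (Fin.ext h)
  have hac' : (a : ℕ) ≠ c := fun h => hac (Fin.ext h)
  rcases lt_or_gt_of_ne hab' with hab2 | hab2
  · -- a < b
    have hA : Abar f a b := (ltp_of_lt hab2).1 h1
    rcases lt_or_gt_of_ne hbc' with hbc2 | hbc2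
    · -- a < b < c
      have hB : Abar f b c := (ltp_of_lt hbc2).1 h2
      have hacv : (a : ℕ) < c := by omega
      refine (ltp_of_lt hacv).2 ?_
      intro k hk hak
      rcases lt_or_ge k b with hkb | hkb
      · have h3 : f c < f b := hB b hbc2 le_rfl
        have h4 : f b < f k := hA k hkb hak
        omega
      · exact hB k hk hkb
    · -- c < b, a < b
      have hB : ¬ Abar f c b := (ltp_of_gt hbc2).1 h2
      rcases lt_or_gt_of_ne hac' with hac2 | hac2
      · -- a < c < b : contradiction
        exfalso
        exact hB (fun k hk hck => hA k hk (by omega))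
      · -- c < a < b
        refine (ltp_of_gt hac2).2 ?_
        intro hCA
        refine hB ?_
        intro k hk hck
        rcases lt_or_ge k a with hka | hka
        · have h3 : f a < f k := hCA k hka hck
          have h4 : f b < f a := hA a hab2 le_rfl
          omega
        · exact hA k hk hka
  · -- b < a
    have hA : ¬ Abar f b a := ((ltp_of_gt hab2).1 h1)
    rcases lt_or_gt_of_ne hbc' with hbc2 | hbc2
    · -- b < c
      have hB : Abar f b c := (ltp_of_lt hbc2).1 h2
      rcases lt_or_gt_of_ne hac' with hac2 | hac2
      · -- b < a < c
        refine (ltp_of_lt hac2).2 ?_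
        intro k hk hak
        exact hB k hk (by omega)
      · -- b < c < a
        refine (ltp_of_gt hac2).2 ?_
        intro hCA
        refine hA ?_
        intro k hk hbk
        rcases lt_or_ge k c with hkc | hkc
        · have h3 : f c < f k := hB k hkc hbk
          have h4 : f a < f c := hCA c hac2 le_rfl
          omega
        · exact hCA k hk hkc
    · -- c < b < a
      have hB : ¬ Abar f c b := (ltp_of_gt hbc2).1 h2
      have hac2 : (c : ℕ) < a := by omega
      refine (ltp_of_gt hac2).2 ?_
      intro hCA
      refine hA ?_
      intro k hk hbk
      exact hCA k hk (by omega)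

open Finset in
def pcount (f : ℕ → ℕ) (a : Fin n) : ℕ := #(univ.filter (fun b => ltp f b a))

open Finset in
lemma pcount_lt {a b : Fin n} (h : ltp f a b) : pcount f a < pcount f b := by
  apply Finset.card_lt_card
  constructor
  · intro c hc
    simp only [mem_filter, mem_univ, true_and] at hc ⊢
    exact ltp_trans hc h
  · intro hsub
    have ha : a ∈ univ.filter (fun c => ltp f c b) := by
      simp only [mem_filter, mem_univ, true_and]; exact h
    have := hsub ha
    simp only [mem_filter, mem_univ, true_and] at this
    exact ltp_irrefl a this

open Finset in
lemma pcount_lt_n (a : Fin n) : pcount f a < n := by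
  have h1 : univ.filter (fun b => ltp f b a) ⊆ univ.erase a := by
    intro c hc
    simp only [mem_filter, mem_univ, true_and] at hc
    refine mem_erase.2 ⟨?_, mem_univ c⟩
    rintro rfl
    exact ltp_irrefl c hc
  calc pcount f a ≤ #(univ.erase a) := Finset.card_le_card h1
    _ < #(univ : Finset (Fin n)) := Finset.card_erase_lt_of_mem (mem_univ a)
    _ = n := by simp

def pfun (f : ℕ → ℕ) : Fin n → Fin n := fun a => ⟨pcount f a, pcount_lt_n a⟩

lemma pfun_injective : Function.Injective (pfun (n := n) f) := by
  intro a b hab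
  by_contra hne
  have h2 : pcount f a = pcount f b := by
    have := congrArg Fin.val hab
    simpa [pfun] using this
  rcases ltp_total a b hne with h | h
  · exact absurd h2 (Nat.ne_of_lt (pcount_lt h))
  · exact absurd h2.symm (Nat.ne_of_lt (pcount_lt h))

/-- the permutation associated to a sequence -/
noncomputable def permOf (n : ℕ) (f : ℕ → ℕ) : Equiv.Perm (Fin n) :=
  Equiv.ofBijective (pfun f) (Finite.injective_iff_bijective.1 pfun_injective)

lemma permOf_apply (a : Fin n) : permOf n f a = pfun f a := rfl

lemma permOf_lt_iff {a b : Fin n} : permOf n f a < permOf n f b ↔ ltp f a b := by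
  constructor
  · intro h
    have hne : a ≠ b := by rintro rfl; exact lt_irrefl _ h
    rcases ltp_total a b hne with h' | h'
    · exact h'
    · have := pcount_lt h'
      rw [permOf_apply, permOf_apply, Fin.lt_def] at h
      simp only [pfun] at h
      omega
  · intro h
    rw [permOf_apply, permOf_apply, Fin.lt_def]
    simpa [pfun] using pcount_lt h

lemma avoids132_permOf : Avoids132 (permOf n f) := by
  rintro ⟨i, j, k, hij, hjk, h1, h2⟩
  have hik : ltp f i k := permOf_lt_iff.1 h1
  have hkj : ltp f k j := permOf_lt_iff.1 h2
  have hik' : (i : ℕ) < k := by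
    have := Fin.lt_def.1 (lt_trans hij hjk); omega
  have hjk' : (j : ℕ) < k := Fin.lt_def.1 hjk
  have hA : Abar f i k := (ltp_of_lt hik').1 hik
  have hB : ¬ Abar f j k := (ltp_of_gt hjk').1 hkj
  exact hB (fun m hm hjm => hA m hm (by
    have := Fin.lt_def.1 hij; omega))

end ltp

end ULIS132
namespace ULIS132

open Finset

lemma exists_min_prop (P : ℕ → Prop) [DecidablePred P] (h : ∃ k, P k) :
    ∃ j, P j ∧ ∀ k < j, ¬ P k :=
  ⟨Nat.find h, Nat.find_spec h, fun k hk => Nat.find_min h hk⟩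

section valid

variable {n : ℕ} {f : ℕ → ℕ}
variable (v1 : ∀ k < n, 1 ≤ f k) (v2 : ∀ k, k + 1 < n → f k ≤ f (k + 1) + 1)
  (v3 : f (n - 1) = 1)

lemma injOn_f {s : Finset (Fin n)}
    (hs : ∀ a ∈ s, ∀ b ∈ s, (a : ℕ) < (b : ℕ) → Abar f a b) :
    Set.InjOn (fun b : Fin n => f b) s := by
  intro a ha b hb hfab
  by_contra hne
  have hne' : a ≠ b := fun h => hne h
  rcases lt_or_gt_of_ne (fun h => hne' (Fin.ext h) : (a : ℕ) ≠ b) with h | h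
  · have := hs a ha b hb h a h le_rfl
    simp only at hfab
    omega
  · have := hs b hb a ha h b h le_rfl
    simp only at hfab
    omega

include v1 v2 v3 in
lemma card_abar_filter (i : Fin n) :
    #(univ.filter (fun b : Fin n => i ≤ b ∧ Abar f (i : ℕ) b)) = f i := by
  classical
  set s := univ.filter (fun b : Fin n => i ≤ b ∧ Abar f (i : ℕ) b) with hs
  have hmem : ∀ b : Fin n, b ∈ s ↔ (i ≤ b ∧ Abar f (i : ℕ) b) := by
    intro b; simp [hs]
  have hinj : Set.InjOn (fun b : Fin n => f b) s := by
    apply injOn_f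
    intro a ha b hb hab
    have h2 := ((hmem b).1 hb).2
    intro k hk hak
    exact h2 k hk (le_trans ((hmem a).1 ha).1 hak)
  have himage : s.image (fun b : Fin n => f b) = Finset.Icc 1 (f i) := by
    apply Finset.Subset.antisymm
    · intro v hv
      simp only [Finset.mem_image] at hv
      obtain ⟨b, hb, rfl⟩ := hv
      obtain ⟨hib, hAb⟩ := (hmem b).1 hb
      refine Finset.mem_Icc.2 ⟨v1 b b.isLt, ?_⟩
      rcases eq_or_lt_of_le (Fin.le_def.1 hib) with h | h
      · rw [← h]
      · exact le_of_lt (hAb i h le_rfl)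
    · intro v hv
      obtain ⟨hv1, hv2⟩ := Finset.mem_Icc.1 hv
      have hP : ∃ k, (i : ℕ) ≤ k ∧ k < n ∧ f k ≤ v := by
        refine ⟨n - 1, ?_, ?_, ?_⟩
        · have := i.isLt; omega
        · have := i.isLt; omega
        · rw [v3]; exact hv1
      classical
      obtain ⟨j, hPj, hmin⟩ := exists_min_prop _ hP
      obtain ⟨hij, hjn, hfj⟩ := hPj
      have hfjv : f j = v := by
        rcases eq_or_lt_of_le hij with h | h
        · -- j = i
          rw [← h] at hfj ⊢
          omega
        · -- i < j
        
          have hj1 : ¬ ((i : ℕ) ≤ j - 1 ∧ j - 1 < n ∧ f (j - 1) ≤ v) :=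
            hmin (j - 1) (by omega)
          have h1 : (i : ℕ) ≤ j - 1 := by omega
          have h2 : j - 1 < n := by omega
          have h3 : v < f (j - 1) := by
            by_contra hcon
            exact hj1 ⟨h1, h2, by omega⟩
          have h4 : f (j - 1) ≤ f (j - 1 + 1) + 1 := v2 (j - 1) (by omega)
          have h5 : j - 1 + 1 = j := by omega
          rw [h5] at h4
          omega
      refine Finset.mem_image.2 ⟨⟨j, hjn⟩, ?_, hfjv⟩
      refine (hmem _).2 ⟨?_, ?_⟩
      · exact Fin.le_def.2 hij
      · intro k hk hik
        have hnk := hmin k hk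
        have : ¬ (f k ≤ v) := fun hc => hnk ⟨hik, by omega, hc⟩
        simp only at hfjv ⊢
        omega
  calc #s = #(s.image (fun b : Fin n => f b)) := (Finset.card_image_of_injOn hinj).symm
    _ = #(Finset.Icc 1 (f i)) := by rw [himage]
    _ = f i := by rw [Nat.card_Icc]; omega

end valid

end ULIS132
namespace ULIS132

open Finset

section ulis

variable {n : ℕ} {f : ℕ → ℕ}

theorem hasULIS_permOf (v1 : ∀ k < n, 1 ≤ f k)
    (v2 : ∀ k, k + 1 < n → f k ≤ f (k + 1) + 1) (v3 : f (n - 1) = 1)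
    (jstar : Fin n) (hjs : ∀ k : Fin n, k ≠ jstar → f k < f jstar) :
    HasULIS (permOf n f) := by
  classical
  set sstar := univ.filter (fun b : Fin n => jstar ≤ b ∧ Abar f (jstar : ℕ) b) with hss
  have hmem : ∀ b : Fin n, b ∈ sstar ↔ (jstar ≤ b ∧ Abar f (jstar : ℕ) b) := by
    intro b; simp [hss]
  have hAfun : ∀ s : Finset (Fin n), IncSubseq (permOf n f) s →
      ∀ a ∈ s, ∀ b ∈ s, (a : ℕ) < (b : ℕ) → Abar f a b := by
    intro s hs a ha b hb hab
    have := hs a ha b hb (Fin.lt_def.2 hab)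
    exact (ltp_of_lt hab).1 (permOf_lt_iff.1 this)
  have hinc : IncSubseq (permOf n f) sstar := by
    intro a ha b hb hab
    rw [permOf_lt_iff]
    refine (ltp_of_lt (Fin.lt_def.1 hab)).2 ?_
    intro k hk hak
    exact ((hmem b).1 hb).2 k hk (le_trans (Fin.le_def.1 ((hmem a).1 ha).1) hak)
  have hboundgen : ∀ s : Finset (Fin n), IncSubseq (permOf n f) s → #s ≤ f jstar := by
    intro s hs
    have hinj := injOn_f (hAfun s hs)
    have himg : s.image (fun b : Fin n => f b) ⊆ Finset.Icc 1 (f jstar) := by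
      intro v hv
      obtain ⟨b, hb, rfl⟩ := Finset.mem_image.1 hv
      refine Finset.mem_Icc.2 ⟨v1 b b.isLt, ?_⟩
      by_cases hbj : b = jstar
      · subst hbj; exact le_rfl
      · exact le_of_lt (hjs b hbj)
    calc #s = #(s.image (fun b : Fin n => f b)) := (Finset.card_image_of_injOn hinj).symm
      _ ≤ #(Finset.Icc 1 (f jstar)) := Finset.card_le_card himg
      _ = f jstar := by rw [Nat.card_Icc]; omega
  have hcard : #sstar = f jstar := card_abar_filter v1 v2 v3 jstar
  refine ⟨sstar, ⟨hinc, fun t ht => by rw [hcard]; exact hboundgen t ht⟩, ?_⟩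
  rintro s ⟨hs1, hs2⟩
  have hle : #s ≤ f jstar := hboundgen s hs1
  have hge : f jstar ≤ #s := by
    have := hs2 sstar hinc
    omega
  have hcards : #s = f jstar := le_antisymm hle hge
  have hA := hAfun s hs1
  have hinj := injOn_f hA
  have himgsub : s.image (fun b : Fin n => f b) ⊆ Finset.Icc 1 (f jstar) := by
    intro v hv
    obtain ⟨b, hb, rfl⟩ := Finset.mem_image.1 hv
    refine Finset.mem_Icc.2 ⟨v1 b b.isLt, ?_⟩
    by_cases hbj : b = jstar
    · subst hbj; exact le_rfl
    · exact le_of_lt (hjs b hbj)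
  have himg : s.image (fun b : Fin n => f b) = Finset.Icc 1 (f jstar) :=
    Finset.eq_of_subset_of_card_le himgsub (by
      rw [Nat.card_Icc, Finset.card_image_of_injOn hinj, hcards]; omega)
  have hjmem : jstar ∈ s := by
    have h1 : f jstar ∈ s.image (fun b : Fin n => f b) := by
      rw [himg]; exact Finset.mem_Icc.2 ⟨v1 jstar jstar.isLt, le_rfl⟩
    obtain ⟨a, ha, hfa⟩ := Finset.mem_image.1 h1
    by_cases haj : a = jstar
    · exact haj ▸ ha
    · exact absurd hfa (ne_of_lt (hjs a haj))
  have hC : ∀ d, ∀ b ∈ s, f jstar ≤ f b + d → Abar f (jstar : ℕ) b := by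
    intro d
    induction d with
    | zero =>
      intro b hb hfb
      have hbj : b = jstar := by
        by_contra hne
        have := hjs b hne
        omega
      subst hbj
      intro k hk hjk
      omega
    | succ d ih =>
      intro b hb hfb
      by_cases hd : f jstar ≤ f b + d
      · exact ih b hb hd
      · have hfb' : f jstar = f b + (d + 1) := by omega
        have hbne : b ≠ jstar := by
          intro h; subst h; omega
        have hbltj : f b < f jstar := hjs b hbne
        have hmem2 : f b + 1 ∈ s.image (fun b : Fin n => f b) := by
          rw [himg]; exact Finset.mem_Icc.2 ⟨by omega, by omega⟩
        obtain ⟨a, ha, hfa⟩ := Finset.mem_image.1 hmem2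
        have hAja : Abar f (jstar : ℕ) a := ih a ha (by omega)
        have haltb : (a : ℕ) < b := by
          rcases lt_trichotomy (a : ℕ) (b : ℕ) with h | h | h
          · exact h
          · exfalso
            have : a = b := Fin.ext h
            subst this
            omega
          · exfalso
            have h2 := hA b hb a ha h
            have h3 := h2 b h le_rfl
            omega
        have hAab : Abar f (a : ℕ) b := hA a ha b hb haltb
        intro k hk hjk
        rcases lt_or_ge k (a : ℕ) with hka | hka
        · have h4 := hAja k hka hjk
          omega
        · exact hAab k hk hka
  have hsub : s ⊆ sstar := by
    intro b hb
    refine (hmem b).2 ⟨?_, ?_⟩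
    · by_contra hlt
      push_neg at hlt
      have h1 := hA b hb jstar hjmem (Fin.lt_def.1 hlt)
      have h2 := h1 b (Fin.lt_def.1 hlt) le_rfl
      have hbne : b ≠ jstar := ne_of_lt hlt
      have := hjs b hbne
      omega
    · exact hC (f jstar) b hb (by omega)
  exact Finset.eq_of_subset_of_card_le hsub (by rw [hcards, hcard])

/-- the recovery set: the value of `f` is recoverable from the permutation -/
lemma recover_f (v1 : ∀ k < n, 1 ≤ f k)
    (v2 : ∀ k, k + 1 < n → f k ≤ f (k + 1) + 1) (v3 : f (n - 1) = 1) (i : Fin n) :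
    #(univ.filter (fun b : Fin n =>
      b = i ∨ ((i : ℕ) < (b : ℕ) ∧ permOf n f i < permOf n f b))) = f i := by
  classical
  have hset : univ.filter (fun b : Fin n =>
      b = i ∨ ((i : ℕ) < (b : ℕ) ∧ permOf n f i < permOf n f b)) =
      univ.filter (fun b : Fin n => i ≤ b ∧ Abar f (i : ℕ) b) := by
    apply Finset.filter_congr
    intro b _
    constructor
    · rintro (rfl | ⟨hib, hlt⟩)
      · exact ⟨le_rfl, fun k hk hik => by omega⟩
      · exact ⟨Fin.le_def.2 (le_of_lt hib), (ltp_of_lt hib).1 (permOf_lt_iff.1 hlt)⟩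
    · rintro ⟨hib, hA⟩
      rcases eq_or_lt_of_le (Fin.le_def.1 hib) with h | h
      · exact Or.inl (Fin.ext h.symm)
      · exact Or.inr ⟨h, permOf_lt_iff.2 ((ltp_of_lt h).2 hA)⟩
  rw [hset]
  exact card_abar_filter v1 v2 v3 i

end ulis

end ULIS132
namespace ULIS132

open Finset

def fOf (L : List ℕ) : ℕ → ℕ := fun k => L.getD k 0

lemma fOf_v1 {L : List ℕ} (h : ValidL L) : ∀ k < L.length, 1 ≤ fOf L k := by
  intro k hk
  rw [fOf, List.getD_eq_getElem _ _ hk]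
  exact h.pos _ (List.getElem_mem hk)

lemma fOf_v2 {L : List ℕ} (h : ValidL L) :
    ∀ k, k + 1 < L.length → fOf L k ≤ fOf L (k + 1) + 1 := by
  intro k hk
  have h1 := List.isChain_iff_getElem.1 h.chain k (by omega)
  simp only [fOf]
  rw [List.getD_eq_getElem _ _ (by omega : k < L.length), List.getD_eq_getElem _ _ hk]
  simpa [List.get_eq_getElem] using h1

lemma fOf_v3 {L : List ℕ} (h : ValidL L) : fOf L (L.length - 1) = 1 := by
  have h1 := List.getLast?_eq_getLast_of_ne_nil h.ne
  rw [h.last] at h1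
  have h2 : L.getLast h.ne = 1 := by
    injection h1 with h1
    exact h1.symm
  have h3 := List.getLast_eq_getElem h.ne
  have hlen : 0 < L.length := List.length_pos_iff.2 h.ne
  rw [fOf, List.getD_eq_getElem _ _ (by omega : L.length - 1 < L.length)]
  rw [h3] at h2
  exact h2

lemma getD_append_lt : ∀ (l l' : List ℕ) (k : ℕ), k < l.length →
    (l ++ l').getD k 0 = l.getD k 0
  | [], _, k, h => by simp at h
  | a :: t, l', 0, _ => rfl
  | a :: t, l', k + 1, h => by
    simp only [List.cons_append, List.getD_cons_succ]
    exact getD_append_lt t l' k (by simpa using h)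

lemma getD_append_ge : ∀ (l l' : List ℕ) (k : ℕ), l.length ≤ k →
    (l ++ l').getD k 0 = l'.getD (k - l.length) 0
  | [], l', k, _ => by simp
  | a :: t, l', 0, h => by simp at h
  | a :: t, l', k + 1, h => by
    simp only [List.cons_append, List.getD_cons_succ]
    rw [getD_append_ge t l' k (by simpa using h)]
    congr 1
    simp only [List.length_cons]
    omega

lemma umax_index {L : List ℕ} {M : ℕ} (h : UMax L M) :
    ∃ j < L.length, fOf L j = M ∧ ∀ k < L.length, k ≠ j → fOf L k < M := by
  obtain ⟨a, b, rfl, ha, hb⟩ := h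
  refine ⟨a.length, by simp only [List.length_append, List.length_cons]; omega, ?_, ?_⟩
  · show (a ++ M :: b).getD a.length 0 = M
    rw [getD_append_ge a _ _ le_rfl, Nat.sub_self]
    rfl
  · intro k hk hkj
    rcases lt_or_ge k a.length with h1 | h1
    · show (a ++ M :: b).getD k 0 < M
      rw [getD_append_lt _ _ _ h1, List.getD_eq_getElem _ _ h1]
      exact ha _ (List.getElem_mem h1)
    · have h2 : a.length < k := lt_of_le_of_ne h1 (Ne.symm hkj)
      show (a ++ M :: b).getD k 0 < M
      rw [getD_append_ge a _ _ h1]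
      have h3 : k - a.length = (k - a.length - 1) + 1 := by omega
      rw [h3, List.getD_cons_succ]
      have h4 : k - a.length - 1 < b.length := by
        simp only [List.length_append, List.length_cons] at hk
        omega
      rw [List.getD_eq_getElem _ _ h4]
      exact hb _ (List.getElem_mem h4)

lemma list_ext_getD {L1 L2 : List ℕ} (hl : L1.length = L2.length)
    (h : ∀ k < L1.length, L1.getD k 0 = L2.getD k 0) : L1 = L2 := by
  apply List.ext_get hl
  intro i h1 h2
  have h3 := h i h1
  rw [List.getD_eq_getElem _ _ h1, List.getD_eq_getElem _ _ h2] at h3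
  simpa [List.get_eq_getElem] using h3

section glue

variable {n : ℕ}

lemma mem_U_of {L : List ℕ} (hL : ValidL L) (hlen : L.length = n) {M : ℕ}
    (hM : UMax L M) :
    Avoids132 (permOf n (fOf L)) ∧ HasULIS (permOf n (fOf L)) := by
  refine ⟨avoids132_permOf, ?_⟩
  obtain ⟨j, hj, hfj, hlt⟩ := umax_index hM
  rw [hlen] at hj hlt
  refine hasULIS_permOf ?_ ?_ ?_ ⟨j, hj⟩ ?_
  · intro k hk; exact fOf_v1 hL k (by omega)
  · intro k hk; exact fOf_v2 hL k (by omega)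
  · rw [← hlen]; exact fOf_v3 hL
  · intro k hk
    have hkj : (k : ℕ) ≠ j := fun h => hk (Fin.ext h)
    have := hlt k k.isLt hkj
    simpa [hfj] using this

lemma permOf_inj {L1 L2 : List ℕ} (h1 : ValidL L1) (h2 : ValidL L2)
    (hl1 : L1.length = n) (hl2 : L2.length = n)
    (heq : permOf n (fOf L1) = permOf n (fOf L2)) : L1 = L2 := by
  have hv : ∀ i : Fin n, fOf L1 i = fOf L2 i := by
    intro i
    have r1 := recover_f (f := fOf L1) (n := n)
      (fun k hk => fOf_v1 h1 k (by omega)) (fun k hk => fOf_v2 h1 k (by omega))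
      (by rw [← hl1]; exact fOf_v3 h1) i
    have r2 := recover_f (f := fOf L2) (n := n)
      (fun k hk => fOf_v1 h2 k (by omega)) (fun k hk => fOf_v2 h2 k (by omega))
      (by rw [← hl2]; exact fOf_v3 h2) i
    rw [← r1, ← r2, heq]
  apply list_ext_getD (by omega)
  intro k hk
  have := hv ⟨k, by omega⟩
  simpa [fOf] using this

lemma valid_phi {L : List ℕ} (hL : ValidL L) (hc : 2 ≤ L.count (maxL L)) :
    ValidL (Phi L) := by
  refine ⟨Phi'_ne_nil hc, Phi'_pos hL.pos, Phi'_chain hc hL.chain, ?_⟩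
  rw [Phi, Phi'_last hc]
  exact hL.last

lemma count_max_ge_two {L : List ℕ} (hL : ValidL L) (hc : L.count (maxL L) ≠ 1) :
    2 ≤ L.count (maxL L) := by
  have h1 : maxL L ∈ L := maxL_mem hL.ne hL.pos
  have h2 : 1 ≤ L.count (maxL L) := List.count_pos_iff.2 h1
  omega

/-- the sequence used for a tree: itself if good, `Phi` of it otherwise -/
def seqOfTree (τ : Tree Unit) : List ℕ :=
  let L := toSeq τ
  if L.count (maxL L) = 1 then L else Phi L

lemma seqOfTree_spec {τ : Tree Unit} (hτ : τ ≠ Tree.nil) :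
    ValidL (seqOfTree τ) ∧ (seqOfTree τ).length = (toSeq τ).length ∧
      ∃ M, UMax (seqOfTree τ) M := by
  have hv : ValidL (toSeq τ) := validL_toSeq hτ
  by_cases hgood : (toSeq τ).count (maxL (toSeq τ)) = 1
  · rw [seqOfTree, if_pos hgood]
    exact ⟨hv, rfl, maxL (toSeq τ), umax_of_count (fun x hx => le_maxL hx) hgood⟩
  · have hc := count_max_ge_two hv hgood
    rw [seqOfTree, if_neg hgood]
    exact ⟨valid_phi hv hc, Phi'_length hc,
      maxL (toSeq τ) + 1, Phi'_umax (fun x hx => le_maxL hx) hc⟩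

lemma seqOfTree_inj {τ1 τ2 : Tree Unit} (h1 : τ1 ≠ Tree.nil) (h2 : τ2 ≠ Tree.nil)
    (hflag : ((toSeq τ1).count (maxL (toSeq τ1)) = 1) ↔
      ((toSeq τ2).count (maxL (toSeq τ2)) = 1))
    (heq : seqOfTree τ1 = seqOfTree τ2) : τ1 = τ2 := by
  have hv1 : ValidL (toSeq τ1) := validL_toSeq h1
  have hv2 : ValidL (toSeq τ2) := validL_toSeq h2
  by_cases hg : (toSeq τ1).count (maxL (toSeq τ1)) = 1
  · have hg2 := hflag.1 hg
    rw [seqOfTree, if_pos hg, seqOfTree, if_pos hg2] at heq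
    exact toSeq_injective heq
  · have hg2 : ¬ (toSeq τ2).count (maxL (toSeq τ2)) = 1 := fun h => hg (hflag.2 h)
    have hc1 := count_max_ge_two hv1 hg
    have hc2 := count_max_ge_two hv2 hg2
    rw [seqOfTree, if_neg hg, seqOfTree, if_neg hg2] at heq
    -- recover the max values
    have hm1 : maxL (Phi (toSeq τ1)) = maxL (toSeq τ1) + 1 :=
      umax_maxL (Phi'_umax (fun x hx => le_maxL hx) hc1)
    have hm2 : maxL (Phi (toSeq τ2)) = maxL (toSeq τ2) + 1 :=
      umax_maxL (Phi'_umax (fun x hx => le_maxL hx) hc2)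
    have hM : maxL (toSeq τ1) = maxL (toSeq τ2) := by
      have := hm1 ▸ hm2 ▸ congrArg maxL heq
      omega
    have hrec : toSeq τ1 = toSeq τ2 := by
      have p1 : Psi' (maxL (toSeq τ1)) (Phi (toSeq τ1)) = toSeq τ1 :=
        Psi'_Phi' hc1 (fun x hx => le_maxL hx) hv1.chain
      have p2 : Psi' (maxL (toSeq τ2)) (Phi (toSeq τ2)) = toSeq τ2 :=
        Psi'_Phi' hc2 (fun x hx => le_maxL hx) hv2.chain
      rw [← p1, ← p2, heq, hM]
    exact toSeq_injective hrec

end glue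

end ULIS132
namespace ULIS132

lemma main_injection (n : ℕ) (hn : 0 < n) :
    ∃ F : {τ : Tree Unit // τ ∈ Tree.treesOfNumNodesEq n} →
      ({p : Equiv.Perm (Fin n) // Avoids132 p ∧ HasULIS p} × Bool),
      Function.Injective F := by
  classical
  have hne : ∀ τ : {τ : Tree Unit // τ ∈ Tree.treesOfNumNodesEq n}, τ.1 ≠ Tree.nil := by
    rintro τ h
    have h2 := BinaryTree.mem_treesOfNumNodesEq.1 τ.2
    rw [h] at h2
    simp only [BinaryTree.numNodes] at h2
    omega
  have hlen : ∀ τ : {τ : Tree Unit // τ ∈ Tree.treesOfNumNodesEq n},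
      (toSeq τ.1).length = n := by
    intro τ
    rw [length_toSeq]
    exact BinaryTree.mem_treesOfNumNodesEq.1 τ.2
  have hspec : ∀ τ : {τ : Tree Unit // τ ∈ Tree.treesOfNumNodesEq n},
      ValidL (seqOfTree τ.1) ∧ (seqOfTree τ.1).length = n ∧
        ∃ M, UMax (seqOfTree τ.1) M := by
    intro τ
    obtain ⟨a, b, c⟩ := seqOfTree_spec (hne τ)
    exact ⟨a, b.trans (hlen τ), c⟩
  refine ⟨fun τ => (⟨permOf n (fOf (seqOfTree τ.1)),
      mem_U_of (hspec τ).1 (hspec τ).2.1 (hspec τ).2.2.choose_spec⟩,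
      decide ((toSeq τ.1).count (maxL (toSeq τ.1)) = 1)), ?_⟩
  intro τ1 τ2 heq
  have h1 : permOf n (fOf (seqOfTree τ1.1)) = permOf n (fOf (seqOfTree τ2.1)) :=
    congrArg (fun x => x.1.1) heq
  have h2 : ((toSeq τ1.1).count (maxL (toSeq τ1.1)) = 1) ↔
      ((toSeq τ2.1).count (maxL (toSeq τ2.1)) = 1) := by
    have := congrArg (fun x => x.2) heq
    simpa [decide_eq_decide] using this
  have hseq : seqOfTree τ1.1 = seqOfTree τ2.1 :=
    permOf_inj (hspec τ1).1 (hspec τ2).1 (hspec τ1).2.1 (hspec τ2).2.1 h1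
  exact Subtype.ext (seqOfTree_inj (hne τ1) (hne τ2) h2 hseq)

end ULIS132

/-- Twice the number of 132-avoiding permutations of length `n` with
a unique longest increasing subsequence is at least the `n`-th Catalan number
`C_n = binomial(2n, n) / (n + 1)`; i.e. `u_n(132) / C_n ≥ 1/2`. -/
theorem two_mul_u_ge_catalan (n : ℕ) (hn : 0 < n) :
    2 * Nat.card {p : Equiv.Perm (Fin n) // Avoids132 p ∧ HasULIS p} ≥
      Nat.choose (2 * n) n / (n + 1) := by
  classical
  obtain ⟨F, hF⟩ := ULIS132.main_injection n hn
  have h1 : Nat.card {τ : Tree Unit // τ ∈ Tree.treesOfNumNodesEq n} = catalan n := by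
    rw [Nat.card_eq_finsetCard]
    exact BinaryTree.treesOfNumNodesEq_card_eq_catalan n
  have h2 := Nat.card_le_card_of_injective F hF
  rw [h1, Nat.card_prod] at h2
  have h4 : Nat.card Bool = 2 := by simp [Nat.card_eq_fintype_card]
  rw [h4] at h2
  have h3 : Nat.choose (2 * n) n / (n + 1) = catalan n := by
    rw [catalan_eq_centralBinom_div]
    rfl
  rw [ge_iff_le, h3]
  omega
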